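/- Let G̃ be a Lie group with Lie algebra 𝔤̃, V a finite-dimensional vector space, and κ: G̃ × 𝔤̃ → V smooth, linear in the second variable, satisfying κ(g₁g₂,v) = κ(g₂, Ad(g₁⁻¹)v) + κ(g₁,v). Let ∂₁κ: 𝔤̃ × 𝔤̃ → V be the derivative of κ in the group variable at the identity, i.e. ∂₁κ(u,v) = (d/dt)|₀ κ(exp(tu), v). Then ∂₁κ(Ad(g⁻¹)u, Ad(g⁻¹)v) = ∂₁κ(u,v) − κ(g, [u,v]) for all g ∈ G̃ and u,v ∈ 𝔤̃. -/
import Mathlib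

theorem stmt12 {G : Type*} [Group G]
    {𝔤 : Type*} [LieRing 𝔤] [LieAlgebra ℝ 𝔤]
    {V : Type*} [NormedAddCommGroup V] [NormedSpace ℝ V] [FiniteDimensional ℝ V]
    (Ad : G →* Module.End ℝ 𝔤)
    (exp : 𝔤 → G)
    (hexp_inv : ∀ (u : 𝔤) (t : ℝ), (exp (t • u))⁻¹ = exp ((-t) • u))
    (hconj : ∀ (g : G) (u : 𝔤) (t : ℝ), g⁻¹ * exp (t • u) * g = exp (t • (Ad g⁻¹ u)))
    (κ : G → (𝔤 →ₗ[ℝ] V))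
    (hκ : ∀ (g₁ g₂ : G) (v : 𝔤), κ (g₁ * g₂) v = κ g₂ (Ad g₁⁻¹ v) + κ g₁ v)
    (hAd : ∀ (g : G) (u v : 𝔤),
      HasDerivAt (fun t : ℝ => κ g (Ad (exp (t • u)) v)) (κ g ⁅u, v⁆) 0)
    (D : 𝔤 → 𝔤 → V)
    (hD : ∀ u v : 𝔤, HasDerivAt (fun t : ℝ => κ (exp (t • u)) v) (D u v) 0) :
    ∀ (g : G) (u v : 𝔤),
      D (Ad g⁻¹ u) (Ad g⁻¹ v) = D u v - κ g ⁅u, v⁆ := by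
  intro g u v
  set w := Ad g⁻¹ v with hw
  have hgw : Ad g w = v := by
    rw [hw]
    have : Ad g * Ad g⁻¹ = 1 := by rw [← map_mul, mul_inv_cancel, map_one]
    calc Ad g (Ad g⁻¹ v) = (Ad g * Ad g⁻¹) v := rfl
      _ = v := by rw [this]; rfl
  -- rewrite the function t ↦ κ (exp (t • Ad g⁻¹ u)) w
  have hfun : (fun t : ℝ => κ (exp (t • Ad g⁻¹ u)) w)
      = fun t : ℝ => κ g (Ad (exp (t • (-u))) v) + κ (exp (t • u)) v + κ g⁻¹ w := by
    funext t
    rw [← hconj g u t, mul_assoc, hκ, inv_inv, hgw, hκ, hexp_inv, neg_smul, ← smul_neg]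
  -- derivative of RHS at 0
  have h1 : HasDerivAt (fun t : ℝ => κ g (Ad (exp (t • (-u))) v)) (κ g ⁅-u, v⁆) 0 :=
    hAd g (-u) v
  have h2 := hD u v
  have h3 : HasDerivAt (fun t : ℝ => κ g (Ad (exp (t • (-u))) v) + κ (exp (t • u)) v + κ g⁻¹ w)
      (κ g ⁅-u, v⁆ + D u v + 0) 0 := (h1.add h2).add (hasDerivAt_const 0 _)
  have h4 : HasDerivAt (fun t : ℝ => κ (exp (t • Ad g⁻¹ u)) w)
      (κ g ⁅-u, v⁆ + D u v + 0) 0 := by rw [hfun]; exact h3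
  have := (hD (Ad g⁻¹ u) w).unique h4
  rw [this, neg_lie, map_neg]
  abel
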